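/- Let φ: [a,b]ⁿ → ℝ be Schur-concave. For x ∈ [a,b]ⁿ, set S(x) = Σᵢ(xᵢ − a) and define u^s ∈ [a,b]ⁿ by filling coordinates to value b in order until the budget s is exhausted (uᵢ = b for i ≤ i^s, u_{i^s+1} = a + s − (b−a)i^s with i^s = max{i : i(b−a) < s}, uᵢ = a otherwise). Then u^{S(x)} majorizes x, and consequently φ(u^{S(x)}) ≤ φ(x) for every x ∈ [a,b]ⁿ. -/

import Mathlib

open Finset

lemma aux_card (n k : ℕ) :
    ((univ : Finset (Fin n)).filter fun i : Fin n => (i:ℕ) < k).card = min k n := by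
  rw [← Finset.card_range (min k n)]
  refine Finset.card_bij (fun i _ => (i : ℕ)) ?_ ?_ ?_
  · intro i hi; simp at hi ⊢; omega
  · intro i hi j hj h; exact Fin.ext h
  · intro j hj; simp at hj; exact ⟨⟨j, by omega⟩, by simp; omega, rfl⟩

lemma aux_range (N : ℕ) (P : ℕ → Prop) [DecidablePred P]
    (hP : ∀ i j : ℕ, i ≤ j → P j → P i) :
    (Finset.range N).filter P = Finset.range (((Finset.range N).filter P).card) := by
  set F := (range N).filter P with hF
  have hdc : ∀ j ∈ F, ∀ i ≤ j, i ∈ F := by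
    intro j hj i hij
    simp only [hF, mem_filter, mem_range] at hj ⊢
    exact ⟨lt_of_le_of_lt hij hj.1, hP i j hij hj.2⟩
  ext i
  simp only [Finset.mem_range]
  constructor
  · intro hi
    have hsub : range (i+1) ⊆ F := by
      intro j hj; simp only [mem_range] at hj; exact hdc i hi j (by omega)
    have := Finset.card_le_card hsub
    simp only [Finset.card_range] at this; omega
  · intro hi
    by_contra hiF
    have hsub : F ⊆ range i := by
      intro j hj; simp only [mem_range]
      by_contra h; exact hiF (hdc j hj i (by omega))
    have := Finset.card_le_card hsub
    simp only [Finset.card_range] at this; omega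

/-- The `i`-th largest entry (0-indexed) of the tuple `x`. -/
noncomputable def sortedDesc (n : ℕ) (x : Fin n → ℝ) : Fin n → ℝ :=
  fun i => x (Tuple.sort x i.rev)

/-- Sum of the `k` largest entries of `x`. -/
noncomputable def topSum (n : ℕ) (x : Fin n → ℝ) (k : ℕ) : ℝ :=
  ∑ i ∈ Finset.univ.filter (fun i : Fin n => (i : ℕ) < k), sortedDesc n x i

/-- `u` majorizes `x`. -/
def Majorizes (n : ℕ) (u x : Fin n → ℝ) : Prop :=
  (∀ k, k < n → topSum n x k ≤ topSum n u k) ∧ (∑ i, x i = ∑ i, u i)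

/-- `u` weakly submajorizes `x`. -/
def WeakSubmajorizes (n : ℕ) (u x : Fin n → ℝ) : Prop :=
  ∀ k, k ≤ n → topSum n x k ≤ topSum n u k

/-- Number of nonzero components. -/
noncomputable def suppCard (n : ℕ) (x : Fin n → ℝ) : ℕ :=
  (Finset.univ.filter (fun i => x i ≠ 0)).card

lemma aux_sum_sorted (n : ℕ) (x : Fin n → ℝ) : ∑ i, sortedDesc n x i = ∑ i, x i := by
  have := Equiv.sum_comp (Fin.revPerm.trans (Tuple.sort x)) x
  simpa [sortedDesc, Equiv.trans_apply] using this

lemma aux_sorted_anti (n : ℕ) (v : Fin n → ℝ) (hv : Antitone v) : sortedDesc n v = v := by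
  have hmono : Monotone (v ∘ (Fin.revPerm : Equiv.Perm (Fin n))) := by
    intro i j hij
    exact hv (by simpa using Fin.rev_le_rev.mpr hij)
  have h := Tuple.comp_sort_eq_comp_iff_monotone.mpr hmono
  funext i
  have h2 := congrFun h.symm i.rev
  simp only [Function.comp_apply, Fin.revPerm_apply, Fin.rev_rev] at h2
  simpa [sortedDesc] using h2

theorem schur_concave_box_majorizer (n : ℕ) (a b : ℝ) (hab : a < b)
    (φ : (Fin n → ℝ) → ℝ)
    (hschur : ∀ x y : Fin n → ℝ, (∀ i, x i ∈ Set.Icc a b) → (∀ i, y i ∈ Set.Icc a b) →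
      Majorizes n x y → φ x ≤ φ y)
    (iS : ℝ → ℕ)
    (hiS : ∀ s : ℝ,
      iS s = ((Finset.range (n + 1)).filter (fun i : ℕ => (i : ℝ) * (b - a) < s)).card - 1)
    (u : ℝ → Fin n → ℝ)
    (hu : ∀ (s : ℝ) (i : Fin n), u s i =
      if (i : ℕ) < iS s then b
      else if (i : ℕ) = iS s then a + s - (b - a) * (iS s) else a)
    (x : Fin n → ℝ) (hx : ∀ i, x i ∈ Set.Icc a b) :
    Majorizes n (u (∑ i, (x i - a))) x ∧ φ (u (∑ i, (x i - a))) ≤ φ x := by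
  rcases Nat.eq_zero_or_pos n with hn | hn
  · subst hn
    have hmaj : Majorizes 0 (u (∑ i, (x i - a))) x :=
      ⟨fun k hk => absurd hk (Nat.not_lt_zero k), by simp⟩
    exact ⟨hmaj, hschur _ _ (fun i => i.elim0) (fun i => i.elim0) hmaj⟩
  set s := ∑ i, (x i - a) with hs
  have hba : (0:ℝ) < b - a := sub_pos.mpr hab
  have hs0 : 0 ≤ s := Finset.sum_nonneg fun i _ => sub_nonneg.mpr (hx i).1
  have hsn : s ≤ (n:ℝ) * (b - a) := by
    calc s ≤ ∑ _i : Fin n, (b - a) :=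
          Finset.sum_le_sum fun i _ => sub_le_sub_right (hx i).2 a
      _ = (n:ℝ) * (b - a) := by
          simp [Finset.sum_const, Finset.card_univ, nsmul_eq_mul]
          ring
  set F := (range (n+1)).filter (fun i : ℕ => (i:ℝ)*(b-a) < s) with hF
  have hFr : F = range F.card := by
    refine aux_range (n+1) _ (fun i j hij hj => lt_of_le_of_lt ?_ hj)
    exact mul_le_mul_of_nonneg_right (Nat.cast_le.mpr hij) hba.le
  have hcn : F.card ≤ n := by
    by_contra h
    have h1 : F.card ≤ n + 1 := by
      calc F.card ≤ (range (n+1)).card := Finset.card_le_card (by rw [hF]; exact Finset.filter_subset _ _)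
        _ = n + 1 := Finset.card_range _
    have h2 : F.card = n + 1 := by omega
    have hmem : (n : ℕ) ∈ F := by rw [hFr, h2]; simp
    rw [hF, Finset.mem_filter] at hmem
    linarith [hmem.2]
  set m := iS s with hm
  have hmF : m = F.card - 1 := by rw [hm, hiS s]
  have hmn : m < n := by omega
  have hm1 : (m:ℝ) * (b - a) ≤ s := by
    rcases Nat.eq_zero_or_pos F.card with h0 | h0
    · have hnot : (0:ℕ) ∉ F := by rw [hFr, h0]; simp
      rw [hF, Finset.mem_filter] at hnot
      push_neg at hnot
      have := hnot (by simp)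
      have hm0 : m = 0 := by omega
      rw [hm0]; simpa using hs0
    · have hmem : m ∈ F := by rw [hFr]; simp only [mem_range]; omega
      rw [hF, Finset.mem_filter] at hmem
      exact hmem.2.le
  have hm2 : s ≤ ((m:ℝ) + 1) * (b - a) := by
    rcases Nat.eq_zero_or_pos F.card with h0 | h0
    · have hnot : (0:ℕ) ∉ F := by rw [hFr, h0]; simp
      rw [hF, Finset.mem_filter] at hnot
      push_neg at hnot
      have hs' := hnot (by simp)
      simp only [Nat.cast_zero, zero_mul, not_lt] at hs'
      nlinarith
    · have hnot : (m + 1 : ℕ) ∉ F := by rw [hFr]; simp only [mem_range]; omega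
      rw [hF, Finset.mem_filter] at hnot
      push_neg at hnot
      have := hnot (by simp only [mem_range]; omega)
      push_cast at this
      linarith
  set t := a + s - (b - a) * m with ht
  have huv : ∀ i : Fin n, u s i = if (i:ℕ) < m then b else if (i:ℕ) = m then t else a := by
    intro i; rw [hu s i, ← hm, ← ht]
  have hta : a ≤ t := by rw [ht]; linarith
  have htb : t ≤ b := by rw [ht]; nlinarith
  have hu_mem : ∀ i, u s i ∈ Set.Icc a b := by
    intro i; rw [huv i]
    split_ifs <;> constructor <;> linarith
  have hu_anti : Antitone (u s) := by
    intro i j hij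
    have hij' : (i:ℕ) ≤ (j:ℕ) := hij
    rw [huv i, huv j]
    split_ifs <;> (try omega) <;> linarith
  have hsorted_u : sortedDesc n (u s) = u s := aux_sorted_anti n (u s) hu_anti
  have htopu : ∀ k, k ≤ n → topSum n (u s) k =
      ∑ j ∈ range k, (if j < m then b else if j = m then t else a) := by
    intro k hk
    rw [topSum, hsorted_u, Finset.sum_filter]
    have hcong : ∀ i : Fin n, (if (i:ℕ) < k then u s i else 0) =
        (fun j : ℕ => if j < k then (if j < m then b else if j = m then t else a) else 0) (i:ℕ) := by
      intro i; rw [huv i]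
    rw [Finset.sum_congr rfl (fun i _ => hcong i),
      Fin.sum_univ_eq_sum_range
        (fun j : ℕ => if j < k then (if j < m then b else if j = m then t else a) else 0) n,
      ← Finset.sum_filter]
    have : (range n).filter (fun j => j < k) = range k := by
      ext j; simp only [mem_filter, mem_range]; omega
    rw [this]
  have hval1 : ∀ k, k ≤ m →
      ∑ j ∈ range k, (if j < m then b else if j = m then t else a) = (k:ℝ) * b := by
    intro k hk
    calc ∑ j ∈ range k, (if j < m then b else if j = m then t else a)
        = ∑ _j ∈ range k, b := by
          refine Finset.sum_congr rfl fun j hj => ?_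
          simp only [mem_range] at hj
          rw [if_pos (by omega)]
      _ = (k:ℝ) * b := by simp [nsmul_eq_mul]
  have hval2 : ∀ k, m < k →
      ∑ j ∈ range k, (if j < m then b else if j = m then t else a) = (k:ℝ) * a + s := by
    intro k hk
    have h1 : ∑ j ∈ range (m+1), (if j < m then b else if j = m then t else a)
        = (m:ℝ) * b + t := by
      rw [Finset.sum_range_succ, hval1 m le_rfl, if_neg (lt_irrefl m), if_pos rfl]
    have h2 : ∑ j ∈ Ico (m+1) k, (if j < m then b else if j = m then t else a)
        = ((k - (m+1) : ℕ) : ℝ) * a := by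
      calc ∑ j ∈ Ico (m+1) k, (if j < m then b else if j = m then t else a)
          = ∑ _j ∈ Ico (m+1) k, a := by
            refine Finset.sum_congr rfl fun j hj => ?_
            simp only [Finset.mem_Ico] at hj
            rw [if_neg (by omega), if_neg (by omega)]
        _ = ((k - (m+1) : ℕ) : ℝ) * a := by
            rw [Finset.sum_const, Nat.card_Ico, nsmul_eq_mul]
    have h3 : ∑ j ∈ range k, (if j < m then b else if j = m then t else a)
        = ∑ j ∈ range (m+1), (if j < m then b else if j = m then t else a)
          + ∑ j ∈ Ico (m+1) k, (if j < m then b else if j = m then t else a) := by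
      rw [Finset.range_eq_Ico,
        ← Finset.sum_Ico_consecutive _ (Nat.zero_le (m+1)) hk, Finset.range_eq_Ico]
    rw [h3, h1, h2, ht, Nat.cast_sub hk]
    push_cast
    ring
  have hsx : ∑ i, sortedDesc n x i = ∑ i, x i := aux_sum_sorted n x
  have hsum_x : ∑ i, x i = (n:ℝ) * a + s := by
    have : s = (∑ i, x i) - (n:ℝ) * a := by
      rw [hs, Finset.sum_sub_distrib]
      simp [Finset.sum_const, Finset.card_univ, nsmul_eq_mul]
    linarith
  have htopx1 : ∀ k, k ≤ n → topSum n x k ≤ (k:ℝ) * b := by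
    intro k hk
    have hb' : ∀ i ∈ (univ : Finset (Fin n)).filter fun i : Fin n => (i:ℕ) < k,
        sortedDesc n x i ≤ b := fun i _ => (hx _).2
    have := Finset.sum_le_card_nsmul _ _ b hb'
    rw [aux_card, min_eq_left hk, nsmul_eq_mul] at this
    exact this
  have htopx2 : ∀ k, k ≤ n → topSum n x k ≤ (k:ℝ) * a + s := by
    intro k hk
    have hsplit : topSum n x k
        + ∑ i ∈ univ.filter (fun i : Fin n => ¬ (i:ℕ) < k), sortedDesc n x i
        = (n:ℝ) * a + s := by
      rw [topSum, Finset.sum_filter_add_sum_filter_not, hsx, hsum_x]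
    have hcards : (univ.filter (fun i : Fin n => ¬ (i:ℕ) < k)).card = n - k := by
      have h := Finset.card_filter_add_card_filter_not
        (s := (univ : Finset (Fin n))) (p := fun i : Fin n => (i:ℕ) < k)
      rw [aux_card, Finset.card_univ, Fintype.card_fin] at h
      omega
    have hlow : ((n - k : ℕ):ℝ) * a
        ≤ ∑ i ∈ univ.filter (fun i : Fin n => ¬ (i:ℕ) < k), sortedDesc n x i := by
      have := Finset.card_nsmul_le_sum
        (univ.filter (fun i : Fin n => ¬ (i:ℕ) < k)) (sortedDesc n x) a (fun i _ => (hx _).1)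
      rwa [hcards, nsmul_eq_mul] at this
    rw [Nat.cast_sub hk] at hlow
    linarith
  have hmaj : Majorizes n (u s) x := by
    constructor
    · intro k hk
      rw [htopu k hk.le]
      rcases le_or_gt k m with h | h
      · rw [hval1 k h]; exact htopx1 k hk.le
      · rw [hval2 k h]; exact htopx2 k hk.le
    · have h1 : topSum n (u s) n = ∑ i, u s i := by
        rw [topSum, hsorted_u, Finset.filter_true_of_mem (fun i _ => i.isLt)]
      have h2 : topSum n (u s) n = (n:ℝ) * a + s := by
        rw [htopu n le_rfl, hval2 n hmn]
      rw [hsum_x, ← h1]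
      exact h2.symm
  exact ⟨hmaj, hschur _ _ hu_mem hx hmaj⟩
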